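/- arXiv:1512.09363 — 5 statements merged into one kernel-verified Lean document; each statement's English description precedes it below -/
import Mathlib

section
/- With a_i = a1(2 - alpha^{i-1}), b_i = b1*beta^{i-1}, 0 < alpha < beta < 1, a1, b1 > 0, and r(i,j) = (b_i - b_j)/(a_j - a_i), for all integers i < j we have r(i,j) < r(i,j+1); that is, for fixed i the sequence j ↦ r(i,j) is strictly increasing. -/
lemma key_ineq (x y : ℝ) (hx : 0 < x) (hxy : x < y) (hy : y < 1) :
    ∀ k : ℕ, 1 ≤ k → x ^ k * (1 - x) - y ^ k * (1 - y) < x ^ k * y ^ k * (y - x) := by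
  intro k hk
  induction k with
  | zero => omega
  | succ n ih =>
    rcases Nat.eq_or_lt_of_le hk with h1 | h1
    · have hn0 : n = 0 := by omega
      subst hn0
      simp only [zero_add, pow_one]
      nlinarith [mul_pos (sub_pos.mpr hxy) (mul_pos (sub_pos.mpr (hxy.trans hy)) (sub_pos.mpr hy))]
    · have hn : 1 ≤ n := by omega
      have H := ih hn
      have hxn : x ^ n * x < 1 := by
        have := pow_lt_one₀ (le_of_lt hx) (hxy.trans hy) (Nat.succ_ne_zero n)
        rwa [pow_succ] at this
      have hyn : 0 < y ^ n := pow_pos (hx.trans hxy) n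
      have hxp : 0 < x ^ n := pow_pos hx n
      have key : 0 < y ^ n * (y - x) * (1 - y) * (1 - x ^ n * x) := by
        apply mul_pos
        apply mul_pos
        apply mul_pos hyn
        · linarith
        · linarith
        · linarith
      have H2 := mul_lt_mul_of_pos_left H hx
      rw [pow_succ, pow_succ]
      nlinarith [H2, key]

theorem r_increasing_in_j (α β a1 b1 : ℝ)
    (hα : 0 < α) (hαβ : α < β) (hβ : β < 1) (ha1 : 0 < a1) (hb1 : 0 < b1)
    (a b : ℕ → ℝ)
    (ha : ∀ i, a i = a1 * (2 - α ^ (i - 1)))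
    (hb : ∀ i, b i = b1 * β ^ (i - 1))
    (i j : ℕ) (hi : 1 ≤ i) (hij : i < j) :
    (b i - b j) / (a j - a i) < (b i - b (j + 1)) / (a (j + 1) - a i) := by
  obtain ⟨k, hk, rfl⟩ : ∃ k, 1 ≤ k ∧ j = i + k := ⟨j - i, by omega, by omega⟩
  set m := i - 1 with hm
  have hj1 : i + k - 1 = m + k := by omega
  have hj2 : i + k + 1 - 1 = m + (k + 1) := by omega
  have e1a : α ^ (m + k) = α ^ m * α ^ k := pow_add α m k
  have e1b : β ^ (m + k) = β ^ m * β ^ k := pow_add β m k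
  have e2a : α ^ (m + (k + 1)) = α ^ m * (α ^ k * α) := by rw [pow_add, pow_succ]
  have e2b : β ^ (m + (k + 1)) = β ^ m * (β ^ k * β) := by rw [pow_add, pow_succ]
  rw [ha, ha, ha, hb, hb, hb, hj1, hj2, ← hm, e1a, e1b, e2a, e2b]
  have hα1 : α < 1 := hαβ.trans hβ
  have hβ0 : 0 < β := hα.trans hαβ
  have hpm : 0 < α ^ m := pow_pos hα m
  have hqm : 0 < β ^ m := pow_pos hβ0 m
  have hXk : α ^ k < 1 := pow_lt_one₀ hα.le hα1 (by omega)
  have hXk0 : 0 < α ^ k := pow_pos hα k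
  have hXk1 : α ^ k * α < 1 := by nlinarith
  have hd1 : 0 < a1 * (2 - α ^ m * α ^ k) - a1 * (2 - α ^ m) := by
    have : α ^ m * α ^ k < α ^ m * 1 := mul_lt_mul_of_pos_left hXk hpm
    nlinarith
  have hd2 : 0 < a1 * (2 - α ^ m * (α ^ k * α)) - a1 * (2 - α ^ m) := by
    have : α ^ m * (α ^ k * α) < α ^ m * 1 := mul_lt_mul_of_pos_left hXk1 hpm
    nlinarith
  rw [div_lt_div_iff₀ hd1 hd2]
  have K := key_ineq α β hα hαβ hβ k hk
  have hcross : (1 - β ^ k) * (1 - α ^ k * α) < (1 - β ^ k * β) * (1 - α ^ k) := by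
    nlinarith [K]
  have h1 : 0 < a1 * b1 * (α ^ m * β ^ m) := by positivity
  nlinarith [mul_lt_mul_of_pos_left hcross h1]
end

section
/- With a_i = a1(2 - alpha^{i-1}), b_i = b1*beta^{i-1}, 0 < alpha < beta < 1, a1, b1 > 0, and r(i,j) = (b_i - b_j)/(a_j - a_i), for every integer i ≥ 2 and every j > i-1 we have r(i-1,j) < (b1/a1)(beta/alpha)^{i-2}; i.e., the limit of r(i-1,j) as j tends to infinity is (b1/a1)(beta/alpha)^{i-2} and it is approached from below. -/
theorem r_below_limit (α β a1 b1 : ℝ)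
    (hα : 0 < α) (hαβ : α < β) (hβ : β < 1) (ha1 : 0 < a1) (hb1 : 0 < b1)
    (a b : ℕ → ℝ)
    (ha : ∀ i, a i = a1 * (2 - α ^ (i - 1)))
    (hb : ∀ i, b i = b1 * β ^ (i - 1))
    (i j : ℕ) (hi : 2 ≤ i) (hij : i - 1 < j) :
    (b (i - 1) - b j) / (a j - a (i - 1)) < (b1 / a1) * (β / α) ^ (i - 2) := by
  have hα1 : α < 1 := hαβ.trans hβ
  have hβ0 : 0 < β := hα.trans hαβ
  set p := i - 2 with hp
  set q := j - 1 with hq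
  have hk : i - 1 - 1 = p := by omega
  have hpq : p < q := by omega
  rw [ha, ha, hb, hb, hk]
  have key : β ^ p * α ^ q < β ^ q * α ^ p := by
    have h1 : α ^ (q - p) < β ^ (q - p) :=
      pow_lt_pow_left₀ hαβ hα.le (by omega)
    have hαq : α ^ q = α ^ p * α ^ (q - p) := by
      rw [← pow_add]; congr 1; omega
    have hβq : β ^ q = β ^ p * β ^ (q - p) := by
      rw [← pow_add]; congr 1; omega
    rw [hαq, hβq]
    have hβp : (0:ℝ) < β ^ p := pow_pos hβ0 p
    have hαp : (0:ℝ) < α ^ p := pow_pos hα p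
    nlinarith [mul_pos hβp hαp]
  have hden : 0 < a1 * (2 - α ^ q) - a1 * (2 - α ^ p) := by
    have : α ^ q < α ^ p := pow_lt_pow_right_of_lt_one₀ hα hα1 hpq
    nlinarith
  have hr : (b1 / a1) * (β / α) ^ p = (b1 * β ^ p) / (a1 * α ^ p) := by
    rw [div_pow]; field_simp
  rw [hr, div_lt_div_iff₀ hden (by positivity)]
  nlinarith [mul_pos ha1 hb1]
end

section
/- With a_i = a1(2 - alpha^{i-1}), b_i = b1*beta^{i-1}, where 0 < alpha < beta < 1 - alpha < 1 and a1, b1 > 0, and r(i,j) = (b_i - b_j)/(a_j - a_i): for all integers i with 2 ≤ i and all k > i, we have r(i-1,k) < r(i,i+1). -/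
theorem r_prev_lt_next (α β a1 b1 : ℝ)
    (hα : 0 < α) (hαβ : α < β) (hβ : β < 1 - α) (ha1 : 0 < a1) (hb1 : 0 < b1)
    (a b : ℕ → ℝ)
    (ha : ∀ i, a i = a1 * (2 - α ^ (i - 1)))
    (hb : ∀ i, b i = b1 * β ^ (i - 1))
    (i k : ℕ) (hi : 2 ≤ i) (hik : i < k) :
    (b (i - 1) - b k) / (a k - a (i - 1)) < (b i - b (i + 1)) / (a (i + 1) - a i) := by
  obtain ⟨n, rfl⟩ := Nat.exists_eq_add_of_le hi
  obtain ⟨t, rfl⟩ := Nat.exists_eq_add_of_lt hik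
  have hα1 : α < 1 := by linarith
  have hβ1 : β < 1 := by linarith
  have hβ0 : 0 < β := lt_trans hα hαβ
  rw [ha, ha, ha, ha, hb, hb, hb, hb]
  have e1 : 2 + n - 1 = n + 1 := by omega
  have e2 : 2 + n + t + 1 - 1 = n + t + 2 := by omega
  have e3 : 2 + n + 1 - 1 = n + 2 := by omega
  rw [e1, e2, e3]
  simp only [Nat.add_sub_cancel]
  have hαn : (0:ℝ) < α ^ n := pow_pos hα n
  have hβn : (0:ℝ) < β ^ n := pow_pos hβ0 n
  have hαt : α ^ (t + 2) < β ^ (t + 2) := pow_lt_pow_left₀ hαβ hα.le (by omega)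
  have hβt1 : β ^ (t + 2) < 1 := pow_lt_one₀ hβ0.le hβ1 (by omega)
  have hαt1 : α ^ (t + 2) < 1 := pow_lt_one₀ hα.le hα1 (by omega)
  -- key inequality
  have key : α * (1 - α) * (1 - β ^ (t + 2)) < β * (1 - β) * (1 - α ^ (t + 2)) := by
    have h1 : α * (1 - α) < β * (1 - β) := by nlinarith
    have h2 : (0:ℝ) < α * (1 - α) := by nlinarith
    have h3 : (0:ℝ) < 1 - β ^ (t + 2) := by linarith
    nlinarith
  have hd1 : (0:ℝ) < a1 * (2 - α ^ (n + t + 2)) - a1 * (2 - α ^ n) := by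
    have : α ^ (n + t + 2) < α ^ n :=
      pow_lt_pow_right_of_lt_one₀ hα hα1 (by omega)
    nlinarith
  have hd2 : (0:ℝ) < a1 * (2 - α ^ (2 + n + 1 - 1)) - a1 * (2 - α ^ (2 + n - 1)) := by
    rw [e1, e3]
    have : α ^ (n + 2) < α ^ (n + 1) :=
      pow_lt_pow_right_of_lt_one₀ hα hα1 (by omega)
    nlinarith
  rw [e1, e3] at hd2
  rw [div_lt_div_iff₀ hd1 hd2]
  have hpos : (0:ℝ) < a1 * b1 * β ^ n * α ^ n := by positivity
  have H := mul_lt_mul_of_pos_left key hpos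
  have en1 : β ^ (n + t + 2) = β ^ n * β ^ (t + 2) := by ring
  have en2 : α ^ (n + t + 2) = α ^ n * α ^ (t + 2) := by ring
  have en3 : β ^ (n + 1) = β ^ n * β := by ring
  have en4 : β ^ (n + 2) = β ^ n * β * β := by ring
  have en5 : α ^ (n + 1) = α ^ n * α := by ring
  have en6 : α ^ (n + 2) = α ^ n * α * α := by ring
  rw [en1, en2, en3, en4, en5, en6]
  nlinarith [H]
end

section
/- With a_i = a1(2 - alpha^{i-1}), b_i = b1*beta^{i-1}, where 0 < alpha < beta < 1 - alpha < 1 and a1, b1 > 0, and r(i,j) = (b_i - b_j)/(a_j - a_i): for every k ≥ 2 and every i with 1 < i < k, max over 1 ≤ j < i of r(j,i) is strictly less than min over i < j ≤ k of r(i,j). -/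
lemma key_aux (α β : ℝ) (hα : 0 < α) (hαβ : α < β) (hβ : β < 1 - α) :
    ∀ n : ℕ, α * (1 - α ^ n) ≤ β * (1 - β ^ n) := by
  intro n
  induction n with
  | zero => simp
  | succ n ih =>
    have h1 : α ^ n ≤ β ^ n := pow_le_pow_left₀ hα.le hαβ.le n
    have h2 : (0:ℝ) ≤ α ^ n := pow_nonneg hα.le n
    have h3 : α * (1 - α) ≤ β * (1 - β) := by nlinarith
    have h4 : (0:ℝ) ≤ α * (1 - α) := by nlinarith
    have h5 : α ^ n * (α * (1 - α)) ≤ β ^ n * (β * (1 - β)) :=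
      mul_le_mul h1 h3 h4 (pow_nonneg (by linarith) n)
    have eα : α * (1 - α ^ (n+1)) = α * (1 - α ^ n) + α ^ n * (α * (1 - α)) := by ring
    have eβ : β * (1 - β ^ (n+1)) = β * (1 - β ^ n) + β ^ n * (β * (1 - β)) := by ring
    rw [eα, eβ]
    linarith

lemma core_ineq (α β : ℝ) (hα : 0 < α) (hαβ : α < β) (hβ : β < 1 - α)
    (m n : ℕ) (hm : 1 ≤ m) (hn : 1 ≤ n) :
    α ^ m * (1 - β ^ m) * (1 - α ^ n) < β ^ m * (1 - β ^ n) * (1 - α ^ m) := by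
  have hα1 : α < 1 := by linarith
  have hβ1 : β < 1 := by linarith
  have hmne : m ≠ 0 := by omega
  have hnne : n ≠ 0 := by omega
  have hAB : α ^ m < β ^ m := pow_lt_pow_left₀ hαβ hα.le hmne
  have hA1 : α ^ m < 1 := pow_lt_one₀ hα.le hα1 hmne
  have hApos : (0:ℝ) < α ^ m := pow_pos hα m
  have hC1 : α ^ n < 1 := pow_lt_one₀ hα.le hα1 hnne
  -- generalized key lemma : α^m (1-α^n) ≤ β^m (1-β^n)
  obtain ⟨m', rfl⟩ : ∃ m', m = m' + 1 := ⟨m - 1, by omega⟩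
  have hkey : α ^ (m' + 1) * (1 - α ^ n) ≤ β ^ (m' + 1) * (1 - β ^ n) := by
    have h1 : α ^ m' ≤ β ^ m' := pow_le_pow_left₀ hα.le hαβ.le m'
    have h2 : α * (1 - α ^ n) ≤ β * (1 - β ^ n) := key_aux α β hα hαβ hβ n
    have h3 : (0:ℝ) ≤ α * (1 - α ^ n) := by nlinarith
    have := mul_le_mul h1 h2 h3 (pow_nonneg (by linarith) m')
    calc α ^ (m' + 1) * (1 - α ^ n) = α ^ m' * (α * (1 - α ^ n)) := by ring
      _ ≤ β ^ m' * (β * (1 - β ^ n)) := this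
      _ = β ^ (m' + 1) * (1 - β ^ n) := by ring
  set M := m' + 1
  have fact1 : (0:ℝ) < (β ^ M - α ^ M) * (α ^ M * (1 - α ^ n)) :=
    mul_pos (by linarith) (mul_pos hApos (by linarith))
  have fact2 : (0:ℝ) ≤ (β ^ M * (1 - β ^ n) - α ^ M * (1 - α ^ n)) * (1 - α ^ M) :=
    mul_nonneg (by linarith) (by linarith)
  nlinarith [fact1, fact2]

theorem max_lt_min (α β a1 b1 : ℝ)
    (hα : 0 < α) (hαβ : α < β) (hβ : β < 1 - α) (ha1 : 0 < a1) (hb1 : 0 < b1)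
    (a b : ℕ → ℝ)
    (ha : ∀ i, a i = a1 * (2 - α ^ (i - 1)))
    (hb : ∀ i, b i = b1 * β ^ (i - 1))
    (k i : ℕ) (hk : 2 ≤ k) (hi1 : 1 < i) (hik : i < k) :
    ∀ j₁, 1 ≤ j₁ → j₁ < i → ∀ j₂, i < j₂ → j₂ ≤ k →
      (b j₁ - b i) / (a i - a j₁) < (b i - b j₂) / (a j₂ - a i) := by
  intro j₁ hj₁ hj₁i j₂ hij₂ hj₂k
  have hα1 : α < 1 := by linarith
  have hβ1 : β < 1 := by linarith
  set p := j₁ - 1 with hp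
  set m := i - j₁ with hmdef
  set n := j₂ - i with hndef
  have hm : 1 ≤ m := by omega
  have hn : 1 ≤ n := by omega
  have hip : i - 1 = p + m := by omega
  have hj2p : j₂ - 1 = p + m + n := by omega
  have hApos : (0:ℝ) < α ^ p := pow_pos hα p
  have hBpos : (0:ℝ) < β ^ p := pow_pos (by linarith) p
  have hAm1 : α ^ m < 1 := pow_lt_one₀ hα.le hα1 (by omega)
  have hAn1 : α ^ n < 1 := pow_lt_one₀ hα.le hα1 (by omega)
  have hAmpos : (0:ℝ) < α ^ m := pow_pos hα m
  have d1 : 0 < a i - a j₁ := by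
    rw [ha, ha, hip]
    simp only [← hp]
    rw [pow_add]
    nlinarith [mul_pos hApos (show (0:ℝ) < 1 - α ^ m by linarith)]
  have d2 : 0 < a j₂ - a i := by
    rw [ha, ha, hip, hj2p]
    rw [pow_add, pow_add]
    nlinarith [mul_pos (mul_pos hApos hAmpos) (show (0:ℝ) < 1 - α ^ n by linarith)]
  rw [div_lt_div_iff₀ d1 d2]
  have core := core_ineq α β hα hαβ hβ m n hm hn
  have Kpos : (0:ℝ) < a1 * b1 * (α ^ p * β ^ p) :=
    mul_pos (mul_pos ha1 hb1) (mul_pos hApos hBpos)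
  have main := mul_lt_mul_of_pos_left core Kpos
  rw [ha, ha, ha, hb, hb, hb, hip, hj2p]
  simp only [← hp]
  have e1 : α ^ (p + m) = α ^ p * α ^ m := pow_add α p m
  have e2 : α ^ (p + m + n) = α ^ p * (α ^ m * α ^ n) := by rw [pow_add, pow_add]; ring
  have e3 : β ^ (p + m) = β ^ p * β ^ m := pow_add β p m
  have e4 : β ^ (p + m + n) = β ^ p * (β ^ m * β ^ n) := by rw [pow_add, pow_add]; ring
  rw [e1, e2, e3, e4]
  nlinarith [main]
end

section
/- The four-term polynomial f(x,y) = x^{485} y + x^{477} y^4 + x^{459} y^8 + x^{243} y^{32} is irreducible: for each i, the i-th term is not O of the sum of the other three. Witnesses: along x = y^{0.7}, x = y^{0.31}, x = y^{0.21}, and x = y^{0.05} respectively, the corresponding term strictly dominates the others asymptotically. -/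
set_option maxRecDepth 8000

/-- Two-variable big-oh: `f = O(g)` over nonnegative reals with
`x ≥ x0` or `y ≥ y0`. -/
def BigO2 (f g : ℝ → ℝ → ℝ) : Prop :=
  ∃ c x0 y0 : ℝ, 0 < c ∧ 0 < x0 ∧ 0 < y0 ∧
    ∀ x y : ℝ, 0 ≤ x → 0 ≤ y → (x0 ≤ x ∨ y0 ≤ y) → f x y ≤ c * g x y

private lemma key_false (c t : ℝ) (hc : 0 < c) (htc : 3 * c + 1 ≤ t) (ht1 : 1 ≤ t)
    {N M1 M2 M3 : ℕ} (h1 : M1 < N) (h2 : M2 < N) (h3 : M3 < N)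
    (h : t ^ N ≤ c * (t ^ M1 + t ^ M2 + t ^ M3)) : False := by
  have hp1 : t ^ M1 ≤ t ^ (N - 1) := pow_le_pow_right₀ ht1 (by omega)
  have hp2 : t ^ M2 ≤ t ^ (N - 1) := pow_le_pow_right₀ ht1 (by omega)
  have hp3 : t ^ M3 ≤ t ^ (N - 1) := pow_le_pow_right₀ ht1 (by omega)
  have hNN : t ^ N = t ^ (N - 1) * t := by rw [← pow_succ]; congr 1; omega
  have hpos : (0:ℝ) < t ^ (N - 1) := pow_pos (by linarith) _
  nlinarith [mul_le_mul_of_nonneg_left hp1 hc.le,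
    mul_le_mul_of_nonneg_left hp2 hc.le, mul_le_mul_of_nonneg_left hp3 hc.le,
    mul_le_mul_of_nonneg_left htc hpos.le]

theorem four_term_irreducible :
    ¬ BigO2 (fun x y => x ^ 485 * y)
      (fun x y => x ^ 477 * y ^ 4 + x ^ 459 * y ^ 8 + x ^ 243 * y ^ 32) ∧
    ¬ BigO2 (fun x y => x ^ 477 * y ^ 4)
      (fun x y => x ^ 485 * y + x ^ 459 * y ^ 8 + x ^ 243 * y ^ 32) ∧
    ¬ BigO2 (fun x y => x ^ 459 * y ^ 8)
      (fun x y => x ^ 485 * y + x ^ 477 * y ^ 4 + x ^ 243 * y ^ 32) ∧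
    ¬ BigO2 (fun x y => x ^ 243 * y ^ 32)
      (fun x y => x ^ 485 * y + x ^ 477 * y ^ 4 + x ^ 459 * y ^ 8) := by
  refine ⟨?_, ?_, ?_, ?_⟩
  · -- case 1: x = t^7, y = t^10
    rintro ⟨c, x0, y0, hc, hx0, hy0, h⟩
    set t : ℝ := max (max x0 y0) (3 * c + 1) with ht_def
    have htc : 3 * c + 1 ≤ t := le_max_right _ _
    have ht1 : (1:ℝ) ≤ t := le_trans (by linarith) htc
    have htx : x0 ≤ t := le_trans (le_max_left _ _) (le_max_left _ _)
    have hxa : x0 ≤ t ^ 7 := htx.trans (le_self_pow₀ ht1 (by norm_num))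
    have H := h (t ^ 7) (t ^ 10) (by positivity) (by positivity) (Or.inl hxa)
    simp only at H
    have H' : t ^ 3405 ≤ c * (t ^ 3379 + t ^ 3293 + t ^ 2021) := by
      calc t ^ 3405 = (t ^ 7) ^ 485 * t ^ 10 := by ring
      _ ≤ c * ((t ^ 7) ^ 477 * (t ^ 10) ^ 4 + (t ^ 7) ^ 459 * (t ^ 10) ^ 8
           + (t ^ 7) ^ 243 * (t ^ 10) ^ 32) := H
      _ = c * (t ^ 3379 + t ^ 3293 + t ^ 2021) := by ring
    exact key_false c t hc htc ht1 (by norm_num) (by norm_num) (by norm_num) H'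
  · -- case 2: x = t^31, y = t^100
    rintro ⟨c, x0, y0, hc, hx0, hy0, h⟩
    set t : ℝ := max (max x0 y0) (3 * c + 1) with ht_def
    have htc : 3 * c + 1 ≤ t := le_max_right _ _
    have ht1 : (1:ℝ) ≤ t := le_trans (by linarith) htc
    have htx : x0 ≤ t := le_trans (le_max_left _ _) (le_max_left _ _)
    have hxa : x0 ≤ t ^ 31 := htx.trans (le_self_pow₀ ht1 (by norm_num))
    have H := h (t ^ 31) (t ^ 100) (by positivity) (by positivity) (Or.inl hxa)
    simp only at H
    have H' : t ^ 15187 ≤ c * (t ^ 15135 + t ^ 15029 + t ^ 10733) := by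
      calc t ^ 15187 = (t ^ 31) ^ 477 * (t ^ 100) ^ 4 := by ring
      _ ≤ c * ((t ^ 31) ^ 485 * t ^ 100 + (t ^ 31) ^ 459 * (t ^ 100) ^ 8
           + (t ^ 31) ^ 243 * (t ^ 100) ^ 32) := H
      _ = c * (t ^ 15135 + t ^ 15029 + t ^ 10733) := by ring
    exact key_false c t hc htc ht1 (by norm_num) (by norm_num) (by norm_num) H'
  · -- case 3: x = t^21, y = t^100
    rintro ⟨c, x0, y0, hc, hx0, hy0, h⟩
    set t : ℝ := max (max x0 y0) (3 * c + 1) with ht_def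
    have htc : 3 * c + 1 ≤ t := le_max_right _ _
    have ht1 : (1:ℝ) ≤ t := le_trans (by linarith) htc
    have htx : x0 ≤ t := le_trans (le_max_left _ _) (le_max_left _ _)
    have hxa : x0 ≤ t ^ 21 := htx.trans (le_self_pow₀ ht1 (by norm_num))
    have H := h (t ^ 21) (t ^ 100) (by positivity) (by positivity) (Or.inl hxa)
    simp only at H
    have H' : t ^ 10439 ≤ c * (t ^ 10285 + t ^ 10417 + t ^ 8303) := by
      calc t ^ 10439 = (t ^ 21) ^ 459 * (t ^ 100) ^ 8 := by ring
      _ ≤ c * ((t ^ 21) ^ 485 * t ^ 100 + (t ^ 21) ^ 477 * (t ^ 100) ^ 4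
           + (t ^ 21) ^ 243 * (t ^ 100) ^ 32) := H
      _ = c * (t ^ 10285 + t ^ 10417 + t ^ 8303) := by ring
    exact key_false c t hc htc ht1 (by norm_num) (by norm_num) (by norm_num) H'
  · -- case 4: x = t, y = t^10
    rintro ⟨c, x0, y0, hc, hx0, hy0, h⟩
    set t : ℝ := max (max x0 y0) (3 * c + 1) with ht_def
    have htc : 3 * c + 1 ≤ t := le_max_right _ _
    have ht1 : (1:ℝ) ≤ t := le_trans (by linarith) htc
    have htx : x0 ≤ t := le_trans (le_max_left _ _) (le_max_left _ _)
    have H := h t (t ^ 10) (by linarith) (by positivity) (Or.inl htx)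
    simp only at H
    have H' : t ^ 563 ≤ c * (t ^ 495 + t ^ 517 + t ^ 539) := by
      calc t ^ 563 = t ^ 243 * (t ^ 10) ^ 32 := by ring
      _ ≤ c * (t ^ 485 * t ^ 10 + t ^ 477 * (t ^ 10) ^ 4
           + t ^ 459 * (t ^ 10) ^ 8) := H
      _ = c * (t ^ 495 + t ^ 517 + t ^ 539) := by ring
    exact key_false c t hc htc ht1 (by norm_num) (by norm_num) (by norm_num) H'
end
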